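/- Let X₁ and Y₁ be independent exponential random variables with mean 1, and let g : ℝ⁺ → ℝ be continuously differentiable with E[g²(X₁Y₁)] < ∞, E[|g′(X₁Y₁) X₁Y₁|] < ∞, and E[|X₁ g(X₁Y₁)|] < ∞. Then E[g′(X₁Y₁)·(X₁Y₁)] = Cov(g(X₁Y₁), X₁); equivalently, ∫₀^∞ ∫₀^∞ g′(xy) xy e^{−x} e^{−y} dy dx = ∫₀^∞ ∫₀^∞ g(xy)(x − 1) e^{−x} e^{−y} dy dx. -/

import Mathlib

open MeasureTheory ProbabilityTheory Real

open Set Filter Topology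
open scoped ENNReal NNReal

lemma expM_eq : expMeasure 1
    = volume.withDensity (fun x => ((exponentialPDFReal 1 x).toNNReal : ℝ≥0∞)) := rfl

lemma exp_pdfReal (x : ℝ) :
    exponentialPDFReal 1 x = if 0 ≤ x then Real.exp (-x) else 0 := by
  rw [exponentialPDFReal, gammaPDFReal]
  split_ifs with h <;> simp [Real.Gamma_one]

lemma expM_integral (f : ℝ → ℝ) :
    ∫ x, f x ∂(expMeasure 1) = ∫ x in Set.Ioi (0:ℝ), f x * Real.exp (-x) := by
  rw [expM_eq, integral_withDensity_eq_integral_smul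
    ((measurable_exponentialPDFReal 1).real_toNNReal) f]
  have : (fun x => (exponentialPDFReal 1 x).toNNReal • f x)
      = Set.indicator (Set.Ici (0:ℝ)) (fun x => f x * Real.exp (-x)) := by
    funext x
    rw [NNReal.smul_def, exp_pdfReal,
      Real.coe_toNNReal _ (by split_ifs; exacts [(exp_pos _).le, le_rfl])]
    by_cases h : (0:ℝ) ≤ x
    · simp [Set.indicator, Set.mem_Ici, h, smul_eq_mul, mul_comm]
    · simp [Set.indicator, Set.mem_Ici, h, smul_eq_mul]
  rw [this, integral_indicator measurableSet_Ici, integral_Ici_eq_integral_Ioi]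

lemma expM_integrable (f : ℝ → ℝ) :
    Integrable f (expMeasure 1)
      ↔ IntegrableOn (fun x => f x * Real.exp (-x)) (Set.Ioi (0:ℝ)) := by
  rw [expM_eq, integrable_withDensity_iff ((measurable_exponentialPDFReal 1).real_toNNReal.coe_nnreal_ennreal) (by simp [ENNReal.coe_lt_top])]
  have : (fun x => f x * ((((exponentialPDFReal 1 x).toNNReal : ℝ≥0∞)).toReal))
      = Set.indicator (Set.Ici (0:ℝ)) (fun x => f x * Real.exp (-x)) := by
    funext x
    rw [ENNReal.coe_toReal, exp_pdfReal,
      Real.coe_toNNReal _ (by split_ifs; exacts [(exp_pos _).le, le_rfl])]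
    by_cases h : (0:ℝ) ≤ x
    · simp [Set.indicator, Set.mem_Ici, h]
    · simp [Set.indicator, Set.mem_Ici, h]
  rw [this, integrable_indicator_iff measurableSet_Ici]
  exact integrableOn_Ici_iff_integrableOn_Ioi


lemma tendsto_atTop_zero_of_integrable {H : ℝ → ℝ} (hi : IntegrableOn H (Set.Ioi (0:ℝ)))
    {L : ℝ} (hl : Tendsto H atTop (𝓝 L)) : L = 0 := by
  by_contra h0
  have hev : ∀ᶠ x in atTop, |L| / 2 ≤ ‖H x‖ := by
    filter_upwards [hl.eventually (eventually_abs_sub_lt L (by positivity : (0:ℝ) < |L|/2))]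
      with x hx
    rw [Real.norm_eq_abs]
    have := abs_sub_abs_le_abs_sub L (H x)
    rw [abs_sub_comm] at this
    linarith
  obtain ⟨N, hN⟩ := hev.exists_forall_of_atTop
  have hNN : IntegrableOn H (Set.Ioi (max N 0)) :=
    hi.mono_set (Set.Ioi_subset_Ioi (le_max_right _ _))
  have hconst : IntegrableOn (fun _ : ℝ => |L| / 2) (Set.Ioi (max N 0)) := by
    refine Integrable.mono' hNN.norm aestronglyMeasurable_const ?_
    filter_upwards [ae_restrict_mem measurableSet_Ioi] with x hx
    rw [Real.norm_eq_abs, abs_of_nonneg (by positivity : (0:ℝ) ≤ |L|/2)]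
    exact hN x (le_of_lt (lt_of_le_of_lt (le_max_left _ _) hx))
  rw [integrableOn_const_iff] at hconst
  rcases hconst with h | h
  · rw [enorm_eq_zero, div_eq_zero_iff, abs_eq_zero] at h
    exact h0 (h.resolve_right (by norm_num))
  · rw [Real.volume_Ioi] at h
    exact (lt_irrefl _ h).elim


lemma int_poly_exp (n : ℕ) :
    IntegrableOn (fun x => x ^ n * Real.exp (-x)) (Set.Ioi (0:ℝ)) := by
  have h := Real.GammaIntegral_convergent (s := n + 1) (by positivity)
  refine h.congr_fun (fun x hx => ?_) measurableSet_Ioi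
  rw [add_sub_cancel_right]; beta_reduce; rw [Real.rpow_natCast, mul_comm]

lemma int_exp_decay : IntegrableOn (fun x => Real.exp (-x)) (Set.Ioi (0:ℝ)) := by
  have := int_poly_exp 0
  simpa using this

lemma key1 (G G' : ℝ → ℝ) (hd : ∀ x ∈ Set.Ioi (0:ℝ), HasDerivAt G (G' x) x)
    (h1 : IntegrableOn (fun x => G' x * (x * Real.exp (-x))) (Set.Ioi (0:ℝ)))
    (h2 : IntegrableOn (fun x => G x ^ 2 * Real.exp (-x)) (Set.Ioi (0:ℝ))) :
    ∫ x in Set.Ioi (0:ℝ), G' x * (x * Real.exp (-x))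
      = ∫ x in Set.Ioi (0:ℝ), G x * ((x - 1) * Real.exp (-x)) := by
  set H : ℝ → ℝ := fun x => G x * (x * Real.exp (-x)) with hH
  set D : ℝ → ℝ := fun x => G' x * (x * Real.exp (-x)) + G x * ((1 - x) * Real.exp (-x)) with hD
  -- derivative of H
  have hHd : ∀ x ∈ Set.Ioi (0:ℝ), HasDerivAt H (D x) x := by
    intro x hx
    have hxe : HasDerivAt (fun x : ℝ => x * Real.exp (-x)) ((1 - x) * Real.exp (-x)) x := by
      have he : HasDerivAt (fun x : ℝ => Real.exp (-x)) (-Real.exp (-x)) x := by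
        simpa using (hasDerivAt_neg x).exp
      have := (hasDerivAt_id x).mul he
      refine this.congr_deriv ?_
      rw [id_eq]; ring
    have := (hd x hx).mul hxe
    convert this using 1 <;> rfl
  -- continuity of G on Ioi 0
  have hGc : ContinuousOn G (Set.Ioi (0:ℝ)) :=
    fun x hx => (hd x hx).continuousAt.continuousWithinAt
  have hGm : AEStronglyMeasurable G (volume.restrict (Set.Ioi (0:ℝ))) :=
    hGc.aestronglyMeasurable measurableSet_Ioi
  -- integrability of the second part of D
  have h2' : IntegrableOn (fun x => G x * ((1 - x) * Real.exp (-x))) (Set.Ioi (0:ℝ)) := by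
    have hdom : IntegrableOn
        (fun x => (G x ^ 2 * Real.exp (-x) + (1 - x) ^ 2 * Real.exp (-x)) / 2)
        (Set.Ioi (0:ℝ)) := by
      have hpoly : IntegrableOn (fun x => (1 - x) ^ 2 * Real.exp (-x)) (Set.Ioi (0:ℝ)) := by
        have h0 := ((int_exp_decay.sub ((int_poly_exp 1).const_mul 2)).add (int_poly_exp 2))
        refine h0.congr (Filter.Eventually.of_forall fun x => ?_)
        simp only [Pi.add_apply, Pi.sub_apply]
        ring
      exact ((h2.add hpoly).div_const 2)
    refine Integrable.mono' hdom
      (hGm.mul ((continuous_const.sub continuous_id).mul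
        (Real.continuous_exp.comp continuous_neg)).aestronglyMeasurable) ?_
    filter_upwards [] with x
    rw [Real.norm_eq_abs, abs_mul, abs_mul]
    have he : |Real.exp (-x)| = Real.exp (-x) := abs_of_pos (Real.exp_pos _)
    rw [he]
    nlinarith [sq_abs (G x), sq_abs (1 - x), abs_nonneg (G x), abs_nonneg (1 - x),
      Real.exp_pos (-x), sq_nonneg (|G x| - |1 - x|)]
  -- integrability of H
  have hHi : IntegrableOn H (Set.Ioi (0:ℝ)) := by
    have hdom : IntegrableOn
        (fun x => (G x ^ 2 * Real.exp (-x) + x ^ 2 * Real.exp (-x)) / 2) (Set.Ioi (0:ℝ)) :=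
      (h2.add (int_poly_exp 2)).div_const 2
    refine Integrable.mono' hdom
      (hGm.mul (continuous_id.mul (Real.continuous_exp.comp continuous_neg)).aestronglyMeasurable)
      ?_
    filter_upwards [] with x
    rw [Real.norm_eq_abs, abs_mul, abs_mul]
    have he : |Real.exp (-x)| = Real.exp (-x) := abs_of_pos (Real.exp_pos _)
    rw [he]
    nlinarith [sq_abs (G x), sq_abs x, abs_nonneg (G x), abs_nonneg x,
      Real.exp_pos (-x), sq_nonneg (|G x| - |x|)]
  have hDi : IntegrableOn D (Set.Ioi (0:ℝ)) := h1.add h2'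
  -- FTC on compact subintervals
  have hftc : ∀ a b : ℝ, 0 < a → 0 < b → (∫ t in a..b, D t) = H b - H a := by
    intro a b ha hb
    apply intervalIntegral.integral_eq_sub_of_hasDerivAt
    · intro x hx
      exact hHd x (lt_of_lt_of_le (lt_min ha hb) hx.1)
    · rw [intervalIntegrable_iff]
      exact hDi.mono_set (fun t ht => lt_of_lt_of_le (lt_min ha hb) ht.1.le)
  -- limit at infinity
  have htop : Tendsto H atTop (𝓝 (H 1 + ∫ t in Set.Ioi (1:ℝ), D t)) := by
    have h3 := intervalIntegral_tendsto_integral_Ioi 1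
      (hDi.mono_set (Set.Ioi_subset_Ioi zero_le_one)) tendsto_id
    have h4 : Tendsto (fun b => H 1 + ∫ t in (1:ℝ)..b, D t) atTop
        (𝓝 (H 1 + ∫ t in Set.Ioi (1:ℝ), D t)) := tendsto_const_nhds.add h3
    refine h4.congr' ?_
    filter_upwards [eventually_gt_atTop (0:ℝ)] with b hb
    rw [hftc 1 b one_pos hb]; ring
  have hLtop : H 1 + (∫ t in Set.Ioi (1:ℝ), D t) = 0 :=
    tendsto_atTop_zero_of_integrable hHi htop
  -- limit at 0⁺
  have hbot : Tendsto H (𝓝[>](0:ℝ)) (𝓝 (H 1 - ∫ t in (0:ℝ)..1, D t)) := by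
    have hInt : IntegrableOn D (Set.uIcc (0:ℝ) 1) := by
      rw [Set.uIcc_of_le zero_le_one, integrableOn_Icc_iff_integrableOn_Ioc]
      exact hDi.mono_set Set.Ioc_subset_Ioi_self
    have hcont := intervalIntegral.continuousOn_primitive_interval_left hInt
    have hc0 : ContinuousWithinAt (fun x => ∫ t in x..1, D t) (Set.uIcc (0:ℝ) 1) 0 :=
      hcont 0 Set.left_mem_uIcc
    have h5 : Tendsto (fun x => ∫ t in x..1, D t) (𝓝[>](0:ℝ))
        (𝓝 (∫ t in (0:ℝ)..1, D t)) := by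
      refine hc0.tendsto.mono_left ?_
      rw [← nhdsWithin_Ioc_eq_nhdsGT zero_lt_one]
      exact nhdsWithin_mono 0
        (by rw [Set.uIcc_of_le zero_le_one]; exact Set.Ioc_subset_Icc_self)
    have h4 : Tendsto (fun x => H 1 - ∫ t in x..1, D t) (𝓝[>](0:ℝ))
        (𝓝 (H 1 - ∫ t in (0:ℝ)..1, D t)) := tendsto_const_nhds.sub h5
    refine h4.congr' ?_
    filter_upwards [self_mem_nhdsWithin] with x hx
    rw [hftc x 1 hx one_pos]; ring
  -- the limit at 0⁺ is zero as well
  have hL0 : H 1 - (∫ t in (0:ℝ)..1, D t) = 0 := by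
    by_contra h0
    set L := H 1 - ∫ t in (0:ℝ)..1, D t with hL
    have hev : ∀ᶠ x in 𝓝[>](0:ℝ), |L| / 2 ≤ |H x| := by
      filter_upwards [hbot.eventually
        (eventually_abs_sub_lt L (by positivity : (0:ℝ) < |L| / 2))] with x hx
      have h6 := abs_sub_abs_le_abs_sub L (H x)
      rw [abs_sub_comm L (H x)] at h6
      linarith
    obtain ⟨δ, hδ0, hδ⟩ := mem_nhdsGT_iff_exists_Ioc_subset.1 hev
    have hδpos : (0:ℝ) < δ := hδ0
    have hsub : IntegrableOn (fun x => G x ^ 2 * Real.exp (-x)) (Set.Ioo 0 δ) :=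
      h2.mono_set (fun x hx => hx.1)
    have hrp : IntegrableOn (fun x => |L| ^ 2 / 4 * x ^ (-2 : ℝ)) (Set.Ioo (0:ℝ) δ) := by
      refine Integrable.mono' hsub
        ((measurable_const.mul ((measurable_id.pow_const _))).aestronglyMeasurable) ?_
      filter_upwards [ae_restrict_mem measurableSet_Ioo] with x hx
      have hx0 : (0:ℝ) < x := hx.1
      have hHx : |L| / 2 ≤ |H x| := hδ ⟨hx.1, hx.2.le⟩
      have hHabs : |H x| = |G x| * (x * Real.exp (-x)) := by
        rw [hH]
        rw [abs_mul, abs_of_pos (mul_pos hx0 (Real.exp_pos _))]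
      rw [hHabs] at hHx
      have hxr : x ^ (-2:ℝ) = (x ^ 2)⁻¹ := by
        rw [show (-2:ℝ) = -(2:ℕ) by norm_num, Real.rpow_neg hx0.le, Real.rpow_natCast]
      rw [Real.norm_eq_abs, hxr, abs_of_nonneg (by positivity)]
      rw [mul_inv_le_iff₀ (by positivity : (0:ℝ) < x ^ 2)]
      have hexple : Real.exp (-x) ≤ 1 := Real.exp_le_one_iff.2 (by linarith)
      have habs2 : |G x| ^ 2 = G x ^ 2 := sq_abs _
      have e1 : |L| ^ 2 / 4 ≤ |G x| ^ 2 * x ^ 2 * Real.exp (-x) ^ 2 := by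
        nlinarith [mul_le_mul hHx hHx (by positivity : (0:ℝ) ≤ |L| / 2)
          (mul_nonneg (abs_nonneg (G x)) (by positivity))]
      have e2 : |G x| ^ 2 * x ^ 2 * Real.exp (-x) ^ 2
          ≤ |G x| ^ 2 * x ^ 2 * Real.exp (-x) := by
        nlinarith [mul_nonneg (mul_nonneg (sq_nonneg (|G x| * x)) (Real.exp_pos (-x)).le)
          (sub_nonneg.2 hexple)]
      rw [habs2] at e1 e2
      nlinarith [e1, e2]
    have hrp' : IntegrableOn (fun x => x ^ (-2 : ℝ)) (Set.Ioo (0:ℝ) δ) := by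
      have hc : |L| ^ 2 / 4 ≠ 0 := by
        have : L ≠ 0 := h0
        positivity
      have h7 := hrp.const_mul (4 / |L| ^ 2)
      refine h7.congr (Filter.Eventually.of_forall fun x => ?_)
      field_simp
    rw [intervalIntegral.integrableOn_Ioo_rpow_iff hδpos] at hrp'
    norm_num at hrp'
  -- put everything together
  have hsplit : (∫ x in Set.Ioi (0:ℝ), D x)
      = (∫ x in Set.Ioc (0:ℝ) 1, D x) + ∫ x in Set.Ioi (1:ℝ), D x := by
    rw [← Set.Ioc_union_Ioi_eq_Ioi (zero_le_one (α := ℝ))]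
    exact setIntegral_union (Set.Ioc_disjoint_Ioi le_rfl) measurableSet_Ioi
      (hDi.mono_set Set.Ioc_subset_Ioi_self)
      (hDi.mono_set (Set.Ioi_subset_Ioi zero_le_one))
  have hIoc : (∫ x in Set.Ioc (0:ℝ) 1, D x) = ∫ t in (0:ℝ)..1, D t :=
    (intervalIntegral.integral_of_le zero_le_one).symm
  have hDzero : (∫ x in Set.Ioi (0:ℝ), D x) = 0 := by
    rw [hsplit, hIoc]; linarith
  have hadd : (∫ x in Set.Ioi (0:ℝ), D x)
      = (∫ x in Set.Ioi (0:ℝ), G' x * (x * Real.exp (-x)))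
        + ∫ x in Set.Ioi (0:ℝ), G x * ((1 - x) * Real.exp (-x)) := by
    rw [hD]
    exact integral_add h1 h2'
  have hneg : (∫ x in Set.Ioi (0:ℝ), G x * ((x - 1) * Real.exp (-x)))
      = - ∫ x in Set.Ioi (0:ℝ), G x * ((1 - x) * Real.exp (-x)) := by
    rw [← integral_neg]
    congr 1
    funext x
    ring
  rw [hneg]
  linarith [hDzero, hadd]

lemma key2 (g g' : ℝ → ℝ) (hderiv : ∀ x : ℝ, 0 < x → HasDerivAt g (g' x) x)
    {y : ℝ} (hy : 0 < y)
    (h1 : Integrable (fun x => g' (x * y) * (x * y)) (expMeasure 1))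
    (h2 : Integrable (fun x => g (x * y) ^ 2) (expMeasure 1)) :
    ∫ x, g' (x * y) * (x * y) ∂(expMeasure 1)
      = ∫ x, g (x * y) * (x - 1) ∂(expMeasure 1) := by
  rw [expM_integral, expM_integral]
  have hd : ∀ x ∈ Set.Ioi (0:ℝ), HasDerivAt (fun x => g (x * y)) (g' (x * y) * y) x := by
    intro x hx
    exact (hderiv (x * y) (mul_pos hx hy)).comp x (hasDerivAt_mul_const y)
  have h1' : IntegrableOn (fun x => (g' (x * y) * y) * (x * Real.exp (-x)))
      (Set.Ioi (0:ℝ)) := by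
    rw [expM_integrable] at h1
    refine h1.congr (Filter.Eventually.of_forall fun x => ?_)
    ring
  have h2' : IntegrableOn (fun x => g (x * y) ^ 2 * Real.exp (-x)) (Set.Ioi (0:ℝ)) := by
    rw [expM_integrable] at h2
    exact h2
  have hk := key1 (fun x => g (x * y)) (fun x => g' (x * y) * y) hd h1' h2'
  calc ∫ x in Set.Ioi (0:ℝ), g' (x * y) * (x * y) * Real.exp (-x)
      = ∫ x in Set.Ioi (0:ℝ), (g' (x * y) * y) * (x * Real.exp (-x)) := by
        congr 1; funext x; ring
    _ = ∫ x in Set.Ioi (0:ℝ), g (x * y) * ((x - 1) * Real.exp (-x)) := hk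
    _ = ∫ x in Set.Ioi (0:ℝ), g (x * y) * (x - 1) * Real.exp (-x) := by
        congr 1; funext x; ring

lemma expM_Iic : expMeasure 1 (Set.Iic 0) = 0 := by
  have h1 : expMeasure 1 (Set.Iio 0) = 0 := by
    rw [expM_eq, withDensity_apply _ measurableSet_Iio]
    rw [setLIntegral_congr_fun measurableSet_Iio
      (fun x (hx : x < 0) => by
        rw [exp_pdfReal, if_neg (not_le.2 hx)])]
    simp
  have h2 : expMeasure 1 {(0:ℝ)} = 0 := by
    rw [expM_eq, withDensity_apply _ (measurableSet_singleton 0)]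
    rw [Measure.restrict_singleton]
    simp
  have h3 : Set.Iic (0:ℝ) = Set.Iio 0 ∪ {0} := by
    ext x; simp [le_iff_lt_or_eq]
  rw [h3]
  exact le_antisymm ((measure_union_le _ _).trans (by rw [h1, h2]; simp)) zero_le

lemma expM_ae_pos : ∀ᵐ x ∂(expMeasure 1), 0 < x := by
  rw [ae_iff]
  convert expM_Iic using 2
  ext x; simp [not_lt]

/-- Partial integration identity: `E[g'(X₁Y₁)·(X₁Y₁)] = Cov(g(X₁Y₁), X₁)`, equivalently
`∫₀^∞∫₀^∞ g'(xy) xy e^(−x) e^(−y) dy dx = ∫₀^∞∫₀^∞ g(xy)(x − 1) e^(−x) e^(−y) dy dx`. -/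
theorem lecam2d_partial_integration
    {Ω : Type*} [MeasureSpace Ω] [IsProbabilityMeasure (ℙ : Measure Ω)]
    (X Y : Ω → ℝ) (hmX : Measurable X) (hmY : Measurable Y)
    (hindep : IndepFun X Y ℙ)
    (hX : Measure.map X ℙ = expMeasure 1) (hY : Measure.map Y ℙ = expMeasure 1)
    (g g' : ℝ → ℝ)
    (hderiv : ∀ x : ℝ, 0 < x → HasDerivAt g (g' x) x)
    (hg'cont : ContinuousOn g' (Set.Ioi 0))
    (hg2 : Integrable (fun ω => (g (X ω * Y ω)) ^ 2) ℙ)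
    (hg'int : Integrable (fun ω => |g' (X ω * Y ω) * (X ω * Y ω)| ) ℙ)
    (hXg : Integrable (fun ω => |X ω * g (X ω * Y ω)| ) ℙ) :
    (∫ ω, g' (X ω * Y ω) * (X ω * Y ω) ∂ℙ) =
        (∫ ω, g (X ω * Y ω) * X ω ∂ℙ) -
          (∫ ω, g (X ω * Y ω) ∂ℙ) * (∫ ω, X ω ∂ℙ) ∧
      (∫ x in Set.Ioi (0 : ℝ), ∫ y in Set.Ioi (0 : ℝ),
          g' (x * y) * (x * y) * Real.exp (-x) * Real.exp (-y)) =
        ∫ x in Set.Ioi (0 : ℝ), ∫ y in Set.Ioi (0 : ℝ),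
          g (x * y) * (x - 1) * Real.exp (-x) * Real.exp (-y) := by
  haveI : IsProbabilityMeasure (expMeasure 1) := isProbabilityMeasure_expMeasure one_pos
  set μ : Measure ℝ := expMeasure 1 with hμ
  -- joint law
  have hpairm : Measurable fun ω => (X ω, Y ω) := hmX.prodMk hmY
  have hmap : Measure.map (fun ω => (X ω, Y ω)) ℙ = μ.prod μ := by
    rw [(indepFun_iff_map_prod_eq_prod_map_map hmX.aemeasurable hmY.aemeasurable).1 hindep,
      hX, hY]
  -- the product measure lives on the open quadrant
  set S : Set (ℝ × ℝ) := Set.Ioi 0 ×ˢ Set.Ioi 0 with hS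
  have hSm : MeasurableSet S := measurableSet_Ioi.prod measurableSet_Ioi
  have haeS : ∀ᵐ p ∂(μ.prod μ), p ∈ S := by
    rw [ae_iff]
    have hsub : {p : ℝ × ℝ | ¬ p ∈ S} ⊆
        ((Set.Ioi 0)ᶜ ×ˢ Set.univ) ∪ (Set.univ ×ˢ (Set.Ioi 0)ᶜ) := by
      intro p hp
      rw [Set.mem_setOf_eq, hS, Set.mem_prod, not_and_or] at hp
      rcases hp with h | h
      · exact Or.inl ⟨h, Set.mem_univ _⟩
      · exact Or.inr ⟨Set.mem_univ _, h⟩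
    have hc : μ ((Set.Ioi 0)ᶜ) = 0 := by
      rw [Set.compl_Ioi]; exact expM_Iic
    refine measure_mono_null hsub (measure_union_null ?_ ?_)
    · rw [Measure.prod_prod, hc, zero_mul]
    · rw [Measure.prod_prod, hc, mul_zero]
  -- continuity on the quadrant and a.e. strong measurability
  have hgc : ContinuousOn g (Set.Ioi 0) :=
    fun x hx => (hderiv x hx).continuousAt.continuousWithinAt
  have hmulC : ContinuousOn (fun p : ℝ × ℝ => p.1 * p.2) S :=
    (continuous_fst.mul continuous_snd).continuousOn
  have hmaps : Set.MapsTo (fun p : ℝ × ℝ => p.1 * p.2) S (Set.Ioi 0) :=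
    fun p hp => show (0:ℝ) < p.1 * p.2 from mul_pos hp.1 hp.2
  have hgSc : ContinuousOn (fun p : ℝ × ℝ => g (p.1 * p.2)) S := hgc.comp hmulC hmaps
  have hAESM : ∀ f : ℝ × ℝ → ℝ, ContinuousOn f S → AEStronglyMeasurable f (μ.prod μ) := by
    intro f hf
    have h : AEStronglyMeasurable f ((μ.prod μ).restrict S) := hf.aestronglyMeasurable hSm
    rwa [Measure.restrict_eq_self_of_ae_mem haeS] at h
  have hA1 : AEStronglyMeasurable (fun p : ℝ × ℝ => g' (p.1 * p.2) * (p.1 * p.2)) (μ.prod μ) :=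
    hAESM _ ((hg'cont.comp hmulC hmaps).mul hmulC)
  have hA2 : AEStronglyMeasurable (fun p : ℝ × ℝ => g (p.1 * p.2) ^ 2) (μ.prod μ) :=
    hAESM _ (hgSc.pow 2)
  have hA3 : AEStronglyMeasurable (fun p : ℝ × ℝ => p.1 * g (p.1 * p.2)) (μ.prod μ) :=
    hAESM _ (continuous_fst.continuousOn.mul hgSc)
  have hA3' : AEStronglyMeasurable (fun p : ℝ × ℝ => g (p.1 * p.2) * p.1) (μ.prod μ) :=
    hAESM _ (hgSc.mul continuous_fst.continuousOn)
  have hA4 : AEStronglyMeasurable (fun p : ℝ × ℝ => g (p.1 * p.2)) (μ.prod μ) := hAESM _ hgSc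
  have hA5 : AEStronglyMeasurable (fun p : ℝ × ℝ => g (p.1 * p.2) * (p.1 - 1)) (μ.prod μ) :=
    hAESM _ (hgSc.mul ((continuous_fst.sub continuous_const).continuousOn))
  -- transfer of integrals and integrability
  have hconv : ∀ f : ℝ × ℝ → ℝ, AEStronglyMeasurable f (μ.prod μ) →
      (∫ ω, f (X ω, Y ω) ∂ℙ) = ∫ p, f p ∂(μ.prod μ) := by
    intro f hf
    rw [← hmap] at hf ⊢
    exact (integral_map hpairm.aemeasurable hf).symm
  have hint : ∀ f : ℝ × ℝ → ℝ, AEStronglyMeasurable f (μ.prod μ) →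
      Integrable (fun ω => f (X ω, Y ω)) ℙ → Integrable f (μ.prod μ) := by
    intro f hf hif
    rw [← hmap] at hf ⊢
    exact (integrable_map_measure hf hpairm.aemeasurable).2 hif
  have hcompAESM : ∀ f : ℝ × ℝ → ℝ, AEStronglyMeasurable f (μ.prod μ) →
      AEStronglyMeasurable (fun ω => f (X ω, Y ω)) ℙ := by
    intro f hf
    rw [← hmap] at hf
    exact hf.comp_aemeasurable hpairm.aemeasurable
  have hI1 : Integrable (fun p : ℝ × ℝ => g' (p.1 * p.2) * (p.1 * p.2)) (μ.prod μ) := by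
    refine hint _ hA1 ?_
    refine (integrable_norm_iff (hcompAESM _ hA1)).1 ?_
    refine hg'int.congr (Filter.Eventually.of_forall fun ω => ?_)
    simp only [Real.norm_eq_abs]
  have hI2 : Integrable (fun p : ℝ × ℝ => g (p.1 * p.2) ^ 2) (μ.prod μ) := hint _ hA2 hg2
  have hI3 : Integrable (fun p : ℝ × ℝ => p.1 * g (p.1 * p.2)) (μ.prod μ) := by
    refine hint _ hA3 ?_
    refine (integrable_norm_iff (hcompAESM _ hA3)).1 ?_
    refine hXg.congr (Filter.Eventually.of_forall fun ω => ?_)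
    simp only [Real.norm_eq_abs]
  have hI3' : Integrable (fun p : ℝ × ℝ => g (p.1 * p.2) * p.1) (μ.prod μ) :=
    hI3.congr (Filter.Eventually.of_forall fun p => mul_comm _ _)
  have hI4 : Integrable (fun p : ℝ × ℝ => g (p.1 * p.2)) (μ.prod μ) := by
    refine hint _ hA4 ?_
    refine Integrable.mono' ((hg2.add (integrable_const 1)).div_const 2)
      (hcompAESM _ hA4) (Filter.Eventually.of_forall fun ω => ?_)
    simp only [Real.norm_eq_abs, Pi.add_apply]
    nlinarith [sq_nonneg (|g (X ω * Y ω)| - 1), sq_abs (g (X ω * Y ω)), abs_nonneg (g (X ω * Y ω))]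
  have hI5 : Integrable (fun p : ℝ × ℝ => g (p.1 * p.2) * (p.1 - 1)) (μ.prod μ) :=
    (hI3'.sub hI4).congr (Filter.Eventually.of_forall fun p => by
      simp only [Pi.sub_apply]; ring)
  -- the central identity over the product measure
  have hPS : (∫ p, g' (p.1 * p.2) * (p.1 * p.2) ∂(μ.prod μ))
      = ∫ p, g (p.1 * p.2) * (p.1 - 1) ∂(μ.prod μ) := by
    rw [MeasureTheory.integral_prod_symm _ hI1, MeasureTheory.integral_prod_symm _ hI5]
    refine integral_congr_ae ?_
    filter_upwards [expM_ae_pos, hI1.prod_left_ae, hI2.prod_left_ae] with y hy h1y h2y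
    exact key2 g g' hderiv hy h1y h2y
  -- expectation of X
  have hEX : (∫ ω, X ω ∂ℙ) = 1 := by
    have h1 : (∫ ω, X ω ∂ℙ) = ∫ x, x ∂μ := by
      rw [← hX]
      exact (integral_map hmX.aemeasurable aestronglyMeasurable_id).symm
    rw [h1, hμ, expM_integral (fun x => x)]
    have h2 : (∫ x in Set.Ioi (0:ℝ), x * Real.exp (-x))
        = ∫ x in Set.Ioi (0:ℝ), Real.exp (-x) * x ^ ((2:ℝ) - 1) := by
      refine setIntegral_congr_fun measurableSet_Ioi fun x hx => ?_
      rw [show (2:ℝ) - 1 = 1 by norm_num, Real.rpow_one, mul_comm]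
    rw [h2, ← Real.Gamma_eq_integral (by norm_num : (0:ℝ) < 2), Real.Gamma_two]
  constructor
  · -- first identity
    rw [hconv _ hA1, hconv _ hA3', hconv _ hA4, hPS, hEX, mul_one]
    have : (∫ p, g (p.1 * p.2) * (p.1 - 1) ∂(μ.prod μ))
        = (∫ p, g (p.1 * p.2) * p.1 ∂(μ.prod μ)) - ∫ p, g (p.1 * p.2) ∂(μ.prod μ) := by
      rw [← integral_sub hI3' hI4]
      refine integral_congr_ae (Filter.Eventually.of_forall fun p => ?_)
      ring
    rw [this]
  · -- second identity
    have hL : (∫ x in Set.Ioi (0 : ℝ), ∫ y in Set.Ioi (0 : ℝ),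
          g' (x * y) * (x * y) * Real.exp (-x) * Real.exp (-y))
        = ∫ p, g' (p.1 * p.2) * (p.1 * p.2) ∂(μ.prod μ) := by
      rw [MeasureTheory.integral_prod _ hI1]
      rw [hμ, expM_integral (fun x => ∫ y, g' (x * y) * (x * y) ∂(expMeasure 1))]
      refine setIntegral_congr_fun measurableSet_Ioi fun x _ => ?_
      rw [← MeasureTheory.integral_mul_const,
        expM_integral (fun y => g' (x * y) * (x * y) * Real.exp (-x))]
    have hR : (∫ x in Set.Ioi (0 : ℝ), ∫ y in Set.Ioi (0 : ℝ),
          g (x * y) * (x - 1) * Real.exp (-x) * Real.exp (-y))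
        = ∫ p, g (p.1 * p.2) * (p.1 - 1) ∂(μ.prod μ) := by
      rw [MeasureTheory.integral_prod _ hI5]
      rw [hμ, expM_integral (fun x => ∫ y, g (x * y) * (x - 1) ∂(expMeasure 1))]
      refine setIntegral_congr_fun measurableSet_Ioi fun x _ => ?_
      rw [← MeasureTheory.integral_mul_const,
        expM_integral (fun y => g (x * y) * (x - 1) * Real.exp (-x))]
    rw [hL, hR, hPS]
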